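/- The commutator subgroup of the free group F_2 = F(g_1, g_2) on two generators is a free group, freely generated by the family of commutators (g_2^{n}, g_1^{k}) = g_2^{-n} g_1^{-k} g_2^{n} g_1^{k}, indexed by all pairs (n, k) of nonzero integers. -/

import Mathlib

/-- The commutator `(g, h) = g⁻¹h⁻¹gh` (the convention of the paper). -/
def pcomm {G : Type*} [Group G] (g h : G) : G := g⁻¹ * h⁻¹ * g * h

/-- The family of commutators `(g₂ⁿ, g₁ᵏ)`, indexed by pairs `(n, k)` of nonzero integers,
as elements of the free group on two generators. -/
def basisFamilyF2 (p : {p : ℤ × ℤ // p.1 ≠ 0 ∧ p.2 ≠ 0}) : FreeGroup (Fin 2) :=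
  pcomm (FreeGroup.of (1 : Fin 2) ^ p.1.1) (FreeGroup.of (0 : Fin 2) ^ p.1.2)

namespace CommF2

/-- Words in "block normal form": list of (type, nonzero exponent), alternating types. -/
def Inv (l : List (Bool × ℤ)) : Prop :=
  l.Chain' (fun p q => p.1 ≠ q.1) ∧ ∀ p ∈ l, p.2 ≠ 0

def W : Type := {l : List (Bool × ℤ) // Inv l}

/-- prepend a block `(t, m)` with merging/cancellation. -/
def pre (t : Bool) (m : ℤ) : List (Bool × ℤ) → List (Bool × ℤ)
  | [] => if m = 0 then [] else [(t, m)]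
  | (t', m') :: r =>
      if m = 0 then (t', m') :: r
      else if t = t' then (if m + m' = 0 then r else (t, m + m') :: r)
      else (t, m) :: (t', m') :: r

@[simp] lemma pre_zero (t : Bool) (l : List (Bool × ℤ)) : pre t 0 l = l := by
  cases l with
  | nil => simp [pre]
  | cons p r => obtain ⟨a, b⟩ := p; simp [pre]

lemma pre_nil (t : Bool) {m : ℤ} (hm : m ≠ 0) : pre t m [] = [(t, m)] := by simp [pre, hm]

lemma pre_cons_ne {t t' : Bool} (h : t ≠ t') {m : ℤ} (hm : m ≠ 0) (m' : ℤ)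
    (r : List (Bool × ℤ)) : pre t m ((t', m') :: r) = (t, m) :: (t', m') :: r := by
  simp [pre, hm, h]

lemma pre_cons_eq {t : Bool} {m : ℤ} (hm : m ≠ 0) (m' : ℤ) (r : List (Bool × ℤ)) :
    pre t m ((t, m') :: r) = if m + m' = 0 then r else (t, m + m') :: r := by
  simp [pre, hm]

lemma pre_inv {t : Bool} {m : ℤ} {l : List (Bool × ℤ)} (h : Inv l) : Inv (pre t m l) := by
  obtain ⟨hc, hz⟩ := h
  rcases eq_or_ne m 0 with rfl | hm
  · simpa using ⟨hc, hz⟩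
  cases l with
  | nil =>
    rw [pre_nil t hm]
    exact ⟨by simp [List.Chain'], by simpa using hm⟩
  | cons p r =>
    obtain ⟨t', m'⟩ := p
    rcases eq_or_ne t t' with rfl | ht
    · rw [pre_cons_eq hm]
      unfold List.Chain' at hc; rw [List.isChain_cons] at hc
      split
      · exact ⟨hc.2, fun p hp => hz p (by simp [hp])⟩
      · refine ⟨List.isChain_cons.2 ⟨fun y hy => by simpa using hc.1 y hy, hc.2⟩, ?_⟩
        rintro p hp
        rcases List.mem_cons.1 hp with rfl | hp
        · simpa using ‹¬ m + m' = 0›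
        · exact hz p (by simp [hp])
    · rw [pre_cons_ne ht hm]
      refine ⟨List.isChain_cons_cons.2 ⟨ht, hc⟩, ?_⟩
      rintro p hp
      rcases List.mem_cons.1 hp with rfl | hp
      · simpa using hm
      · exact hz p hp

lemma pre_pre {t : Bool} (m m' : ℤ) {l : List (Bool × ℤ)} (h : Inv l) :
    pre t m (pre t m' l) = pre t (m + m') l := by
  rcases eq_or_ne m 0 with rfl | hm
  · simp
  rcases eq_or_ne m' 0 with rfl | hm'
  · simp
  cases l with
  | nil =>
    rw [pre_nil t hm', pre_cons_eq hm]
    rcases eq_or_ne (m + m') 0 with h0 | h0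
    · simp [h0, pre]
    · rw [pre_nil t h0]; simp [h0]
  | cons p r =>
    obtain ⟨t', m''⟩ := p
    rcases eq_or_ne t t' with rfl | ht
    · have hm'' : m'' ≠ 0 := h.2 (t, m'') (by simp)
      have hpre_r : ∀ mm : ℤ, mm ≠ 0 → pre t mm r = (t, mm) :: r := by
        intro mm hmm
        cases r with
        | nil => exact pre_nil t hmm
        | cons q r' =>
          obtain ⟨u, v⟩ := q
          have hu : t ≠ u := (List.isChain_cons_cons.1 h.1).1
          exact pre_cons_ne hu hmm v r'
      rw [pre_cons_eq hm']
      rcases eq_or_ne (m' + m'') 0 with h1 | h1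
      · rw [if_pos h1]
        rcases eq_or_ne (m + m') 0 with h2 | h2
        · rw [h2, pre_zero, hpre_r m hm]
          have : m = m'' := by omega
          rw [this]
        · rw [pre_cons_eq h2, if_neg (by omega : ¬ m + m' + m'' = 0), hpre_r m hm]
          have : m + m' + m'' = m := by omega
          rw [this]
      · rw [if_neg h1, pre_cons_eq hm]
        rcases eq_or_ne (m + m') 0 with h2 | h2
        · rw [h2, pre_zero, if_neg (by omega : ¬ m + (m' + m'') = 0)]
          have : m + (m' + m'') = m'' := by omega
          rw [this]
        · rw [pre_cons_eq h2]
          have : m + (m' + m'') = m + m' + m'' := by ring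
          rw [this]
    · rw [pre_cons_ne ht hm', pre_cons_eq hm]
      rcases eq_or_ne (m + m') 0 with h0 | h0
      · rw [if_pos h0, h0, pre_zero]
      · rw [if_neg h0, pre_cons_ne ht h0]

/-- prepend as an operation on normal forms. -/
def preW (t : Bool) (m : ℤ) (x : W) : W := ⟨pre t m x.1, pre_inv x.2⟩

@[simp] lemma preW_val (t : Bool) (m : ℤ) (x : W) : (preW t m x).1 = pre t m x.1 := rfl

lemma preW_preW (t : Bool) (m m' : ℤ) (x : W) :
    preW t m (preW t m' x) = preW t (m + m') x :=
  Subtype.ext (pre_pre m m' x.2)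

@[simp] lemma preW_zero (t : Bool) (x : W) : preW t 0 x = x := Subtype.ext (pre_zero t x.1)

/-- The permutation of `W` given by prepending one letter of type `t`. -/
def e (t : Bool) : Equiv.Perm W where
  toFun := preW t 1
  invFun := preW t (-1)
  left_inv := fun x => by rw [preW_preW]; norm_num
  right_inv := fun x => by rw [preW_preW]; norm_num

lemma e_zpow (t : Bool) (m : ℤ) (x : W) : (e t ^ m) x = preW t m x := by
  induction m using Int.induction_on generalizing x with
  | zero => simp
  | succ n ih =>
    rw [zpow_add_one, Equiv.Perm.mul_apply]
    show (e t ^ (n : ℤ)) (preW t 1 x) = _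
    rw [ih, preW_preW]
  | pred n ih =>
    rw [zpow_sub_one, Equiv.Perm.mul_apply]
    show (e t ^ (-n : ℤ)) (preW t (-1) x) = _
    rw [ih, preW_preW]
    congr 1

/-- The two generators act by prepending blocks of the two types. -/
def gens : Fin 2 → Equiv.Perm W := fun i => e (decide (i = 1))

def rho : FreeGroup (Fin 2) →* Equiv.Perm W := FreeGroup.lift gens

instance : MulAction (FreeGroup (Fin 2)) W := MulAction.compHom W rho

lemma smul_def (g : FreeGroup (Fin 2)) (x : W) : g • x = rho g x := rfl

lemma of_zpow_smul (i : Fin 2) (m : ℤ) (x : W) :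
    (FreeGroup.of i ^ m) • x = preW (decide (i = 1)) m x := by
  rw [smul_def, map_zpow]
  show ((rho (FreeGroup.of i)) ^ m) x = _
  have : rho (FreeGroup.of i) = e (decide (i = 1)) := FreeGroup.lift_apply_of
  rw [this, e_zpow]

lemma basis_smul (p : {p : ℤ × ℤ // p.1 ≠ 0 ∧ p.2 ≠ 0}) (x : W) :
    basisFamilyF2 p • x =
      preW true (-p.1.1) (preW false (-p.1.2) (preW true p.1.1 (preW false p.1.2 x))) := by
  have h : basisFamilyF2 p =
      FreeGroup.of (1 : Fin 2) ^ (-p.1.1) *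
        (FreeGroup.of (0 : Fin 2) ^ (-p.1.2) *
          (FreeGroup.of (1 : Fin 2) ^ p.1.1 * FreeGroup.of (0 : Fin 2) ^ p.1.2)) := by
    unfold basisFamilyF2 pcomm
    rw [zpow_neg, zpow_neg]
    group
  rw [h, mul_smul, mul_smul, mul_smul, of_zpow_smul, of_zpow_smul, of_zpow_smul, of_zpow_smul]
  norm_num

lemma basis_inv_smul (p : {p : ℤ × ℤ // p.1 ≠ 0 ∧ p.2 ≠ 0}) (x : W) :
    (basisFamilyF2 p)⁻¹ • x =
      preW false (-p.1.2) (preW true (-p.1.1) (preW false p.1.2 (preW true p.1.1 x))) := by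
  have h : (basisFamilyF2 p)⁻¹ =
      FreeGroup.of (0 : Fin 2) ^ (-p.1.2) *
        (FreeGroup.of (1 : Fin 2) ^ (-p.1.1) *
          (FreeGroup.of (0 : Fin 2) ^ p.1.2 * FreeGroup.of (1 : Fin 2) ^ p.1.1)) := by
    unfold basisFamilyF2 pcomm
    rw [zpow_neg, zpow_neg]
    group
  rw [h, mul_smul, mul_smul, mul_smul, of_zpow_smul, of_zpow_smul, of_zpow_smul, of_zpow_smul]
  norm_num

/-- The key ping-pong computation. -/
lemma key {t t' : Bool} (ht : t ≠ t') {n k : ℤ} (hn : n ≠ 0) (hk : k ≠ 0) (x : W) :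
    (∃ r, x.1 = (t', -k) :: (t, -n) :: r) ∨
      ∃ r, (preW t (-n) (preW t' (-k) (preW t n (preW t' k x)))).1
        = (t, -n) :: (t', -k) :: r := by
  have hn' : -n ≠ 0 := by omega
  have hk' : -k ≠ 0 := by omega
  simp only [preW_val]
  obtain ⟨l, hinv⟩ := x; dsimp only
  cases l with
  | nil =>
    right
    rw [pre_nil t' hk, pre_cons_ne ht hn, pre_cons_ne (Ne.symm ht) hk', pre_cons_ne ht hn']
    exact ⟨_, rfl⟩
  | cons p r =>
    obtain ⟨s, q⟩ := p
    have hq : q ≠ 0 := hinv.2 (s, q) (by simp)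
    rcases eq_or_ne s t with hst | hs
    · rw [hst]
      right
      rw [pre_cons_ne (Ne.symm ht) hk q r, pre_cons_ne ht hn, pre_cons_ne (Ne.symm ht) hk',
        pre_cons_ne ht hn']
      exact ⟨_, rfl⟩
    · have hst : s = t' := by cases s <;> cases t <;> cases t' <;> simp_all
      rw [hst]
      rcases eq_or_ne q (-k) with rfl | hqk
      · rw [pre_cons_eq hk, if_pos (by omega : k + -k = 0)]
        cases r with
        | nil =>
          right
          rw [pre_nil t hn, pre_cons_ne (Ne.symm ht) hk', pre_cons_ne ht hn']
          exact ⟨_, rfl⟩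
        | cons p' r' =>
          obtain ⟨u, v⟩ := p'
          have hu : u = t := by
            have h2 := (List.isChain_cons_cons.1 hinv.1).1
            cases u <;> cases t <;> cases t' <;> simp_all
          rw [hu]
          have hv : v ≠ 0 := hinv.2 (u, v) (by simp)
          rcases eq_or_ne v (-n) with rfl | hvn
          · left; exact ⟨r', rfl⟩
          · right
            rw [pre_cons_eq hn, if_neg (by omega : ¬ n + v = 0),
              pre_cons_ne (Ne.symm ht) hk', pre_cons_ne ht hn']
            exact ⟨_, rfl⟩
      · right
        rw [pre_cons_eq hk, if_neg (by omega : ¬ k + q = 0), pre_cons_ne ht hn,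
          pre_cons_ne (Ne.symm ht) hk', pre_cons_ne ht hn']
        exact ⟨_, rfl⟩

abbrev I := {p : ℤ × ℤ // p.1 ≠ 0 ∧ p.2 ≠ 0}

instance : Nontrivial I :=
  ⟨⟨⟨(1, 1), by norm_num⟩, ⟨(2, 1), by norm_num⟩, by
    intro h
    have := congrArg (fun q => q.1.1) h
    norm_num at this⟩⟩

def X (p : I) : Set W := {x | ∃ r, x.1 = (true, -p.1.1) :: (false, -p.1.2) :: r}

def Y (p : I) : Set W := {x | ∃ r, x.1 = (false, -p.1.2) :: (true, -p.1.1) :: r}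

theorem injective_lift : Function.Injective (FreeGroup.lift basisFamilyF2) := by
  apply FreeGroup.injective_lift_of_ping_pong basisFamilyF2 X Y
  · intro p
    refine ⟨⟨[(true, -p.1.1), (false, -p.1.2)], ⟨?_, ?_⟩⟩, ⟨[], rfl⟩⟩
    · simp [List.Chain']
    · rintro q hq
      have h1 := p.2.1
      have h2 := p.2.2
      rcases List.mem_cons.1 hq with rfl | hq
      · simpa using h1
      · rcases List.mem_cons.1 hq with rfl | hq
        · simpa using h2
        · simp at hq
  · intro p q hpq
    rw [Function.onFun, Set.disjoint_left]
    rintro x ⟨r, hr⟩ ⟨r', hr'⟩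
    apply hpq
    rw [hr] at hr'
    simp only [List.cons.injEq, Prod.mk.injEq] at hr'
    ext
    · omega
    · omega
  · intro p q hpq
    rw [Function.onFun, Set.disjoint_left]
    rintro x ⟨r, hr⟩ ⟨r', hr'⟩
    apply hpq
    rw [hr] at hr'
    simp only [List.cons.injEq, Prod.mk.injEq] at hr'
    ext
    · omega
    · omega
  · intro p q
    rw [Set.disjoint_left]
    rintro x ⟨r, hr⟩ ⟨r', hr'⟩
    rw [hr] at hr'
    simp at hr'
  · intro p z hz
    rw [Set.mem_smul_set] at hz
    obtain ⟨x, hx, rfl⟩ := hz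
    rw [basis_smul]
    rcases key (t := true) (t' := false) (by simp) p.2.1 p.2.2 x with h | ⟨r, hr⟩
    · exact absurd h hx
    · exact ⟨r, hr⟩
  · intro p z hz
    rw [Set.mem_smul_set] at hz
    obtain ⟨x, hx, rfl⟩ := hz
    show (basisFamilyF2 p)⁻¹ • x ∈ Y p
    rw [basis_inv_smul]
    rcases key (t := false) (t' := true) (by simp) p.2.2 p.2.1 x with h | ⟨r, hr⟩
    · exact absurd h hx
    · exact ⟨r, hr⟩

/-! ### The range is the commutator subgroup -/

def d (n k : ℤ) : FreeGroup (Fin 2) :=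
  (FreeGroup.of 1 ^ n)⁻¹ * (FreeGroup.of 0 ^ k)⁻¹ * FreeGroup.of 1 ^ n * FreeGroup.of 0 ^ k

abbrev H : Subgroup (FreeGroup (Fin 2)) := Subgroup.closure (Set.range basisFamilyF2)

lemma basis_eq_d (p : I) : basisFamilyF2 p = d p.1.1 p.1.2 := rfl

lemma d_mem (n k : ℤ) : d n k ∈ H := by
  rcases eq_or_ne n 0 with rfl | hn
  · have h : d 0 k = 1 := by unfold d; group
    rw [h]; exact one_mem _
  rcases eq_or_ne k 0 with rfl | hk
  · have h : d n 0 = 1 := by unfold d; group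
    rw [h]; exact one_mem _
  exact Subgroup.subset_closure ⟨⟨(n, k), ⟨hn, hk⟩⟩, rfl⟩

lemma conj1 (n k : ℤ) :
    FreeGroup.of 0 * d n k * (FreeGroup.of 0)⁻¹ = (d n (-1))⁻¹ * d n (k - 1) := by
  unfold d; group

lemma conj2 (n k : ℤ) :
    (FreeGroup.of 0)⁻¹ * d n k * FreeGroup.of 0 = (d n 1)⁻¹ * d n (k + 1) := by
  unfold d; group

lemma conj3 (n k : ℤ) :
    (FreeGroup.of 1)⁻¹ * d n k * FreeGroup.of 1 = d (n + 1) k * (d 1 k)⁻¹ := by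
  unfold d; group

lemma conj4 (n k : ℤ) :
    FreeGroup.of 1 * d n k * (FreeGroup.of 1)⁻¹ = d (n - 1) k * (d (-1) k)⁻¹ := by
  unfold d; group

lemma conj_subset (g : FreeGroup (Fin 2)) (hg : ∀ p : I, g * basisFamilyF2 p * g⁻¹ ∈ H) :
    ∀ x ∈ H, g * x * g⁻¹ ∈ H := by
  intro x hx
  have h1 : Subgroup.map (MulAut.conj g).toMonoidHom H ≤ H := by
    rw [MonoidHom.map_closure]
    refine (Subgroup.closure_le _).2 ?_
    rintro y ⟨z, ⟨p, rfl⟩, rfl⟩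
    simpa using hg p
  exact h1 ⟨x, hx, by simp⟩

lemma conj_gen_mem : ∀ (i : Fin 2) (x : FreeGroup (Fin 2)), x ∈ H →
    FreeGroup.of i * x * (FreeGroup.of i)⁻¹ ∈ H ∧
      (FreeGroup.of i)⁻¹ * x * FreeGroup.of i ∈ H := by
  intro i x hx
  have hi : i = 0 ∨ i = 1 := by fin_cases i; exacts [Or.inl rfl, Or.inr rfl]
  rcases hi with rfl | rfl
  · constructor
    · refine conj_subset _ ?_ x hx
      intro p
      rw [basis_eq_d, conj1]
      exact mul_mem (inv_mem (d_mem _ _)) (d_mem _ _)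
    · have h2 := conj_subset (FreeGroup.of (0 : Fin 2))⁻¹ ?_ x hx
      · simpa using h2
      · intro p
        rw [basis_eq_d, inv_inv, conj2]
        exact mul_mem (inv_mem (d_mem _ _)) (d_mem _ _)
  · constructor
    · refine conj_subset _ ?_ x hx
      intro p
      rw [basis_eq_d, conj4]
      exact mul_mem (d_mem _ _) (inv_mem (d_mem _ _))
    · have h2 := conj_subset (FreeGroup.of (1 : Fin 2))⁻¹ ?_ x hx
      · simpa using h2
      · intro p
        rw [basis_eq_d, inv_inv, conj3]
        exact mul_mem (d_mem _ _) (inv_mem (d_mem _ _))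

instance H_normal : H.Normal := by
  rw [← Subgroup.normalizer_eq_top_iff, eq_top_iff, ← FreeGroup.closure_range_of (Fin 2)]
  refine (Subgroup.closure_le _).2 ?_
  rintro g ⟨i, rfl⟩
  rw [SetLike.mem_coe, Subgroup.mem_normalizer_iff]
  intro x
  constructor
  · intro hx
    exact (conj_gen_mem i x hx).1
  · intro hx
    have h2 := (conj_gen_mem i _ hx).2
    have h3 : (FreeGroup.of i)⁻¹ * (FreeGroup.of i * x * (FreeGroup.of i)⁻¹) * FreeGroup.of i
        = x := by group
    rwa [h3] at h2

open scoped commutatorElement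

lemma commute_mk (u v : FreeGroup (Fin 2)) :
    Commute (QuotientGroup.mk' H u) (QuotientGroup.mk' H v) := by
  have base : ∀ i j : Fin 2,
      Commute (QuotientGroup.mk' H (FreeGroup.of i)) (QuotientGroup.mk' H (FreeGroup.of j)) := by
    have key01 : Commute (QuotientGroup.mk' H (FreeGroup.of (0 : Fin 2)))
        (QuotientGroup.mk' H (FreeGroup.of (1 : Fin 2))) := by
      have h1 : QuotientGroup.mk' H (d 1 1) = 1 := by
        rw [QuotientGroup.mk'_apply, QuotientGroup.eq_one_iff]
        exact d_mem 1 1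
      have h2 : d 1 1 = ⁅(FreeGroup.of (1 : Fin 2))⁻¹, (FreeGroup.of (0 : Fin 2))⁻¹⁆ := by
        rw [commutatorElement_def]; unfold d; group
      rw [h2, map_commutatorElement] at h1
      have h3 := commutatorElement_eq_one_iff_commute.1 h1
      rw [map_inv, map_inv] at h3
      exact (h3.inv_inv).symm
    intro i j
    fin_cases i <;> fin_cases j
    · exact Commute.refl _
    · exact key01
    · exact key01.symm
    · exact Commute.refl _
  induction u using FreeGroup.induction_on with
  | C1 => simp
  | of x =>
    induction v using FreeGroup.induction_on with
    | C1 => simp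
    | of y => exact base x y
    | inv_of y ih => rw [map_inv]; exact ih.inv_right
    | mul a b iha ihb => rw [map_mul]; exact iha.mul_right ihb
  | inv_of x ih => rw [map_inv]; exact ih.inv_left
  | mul a b iha ihb => rw [map_mul]; exact iha.mul_left ihb

theorem range_eq :
    (FreeGroup.lift basisFamilyF2).range = commutator (FreeGroup (Fin 2)) := by
  rw [FreeGroup.range_lift_eq_closure]
  apply le_antisymm
  · refine (Subgroup.closure_le _).2 ?_
    rintro y ⟨p, rfl⟩
    have h : basisFamilyF2 p
        = ⁅(FreeGroup.of (1 : Fin 2) ^ p.1.1)⁻¹, (FreeGroup.of (0 : Fin 2) ^ p.1.2)⁻¹⁆ := by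
      rw [commutatorElement_def]
      unfold basisFamilyF2 pcomm
      group
    rw [SetLike.mem_coe, h]
    exact Subgroup.commutator_mem_commutator (Subgroup.mem_top _) (Subgroup.mem_top _)
  · show commutator (FreeGroup (Fin 2)) ≤ H
    rw [commutator_def]
    refine Subgroup.commutator_le.2 ?_
    intro g _ h _
    rw [← QuotientGroup.eq_one_iff (N := H)]
    have : ((⁅g, h⁆ : FreeGroup (Fin 2)) : FreeGroup (Fin 2) ⧸ H)
        = QuotientGroup.mk' H ⁅g, h⁆ := rfl
    rw [this, map_commutatorElement]
    exact commutatorElement_eq_one_iff_commute.2 (commute_mk g h)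

end CommF2


/-- The commutator subgroup of the free group `F₂ = F(g₁, g₂)` is freely generated by the
commutators `(g₂ⁿ, g₁ᵏ) = g₂⁻ⁿ g₁⁻ᵏ g₂ⁿ g₁ᵏ` with `n, k` nonzero integers: the homomorphism
from the free group on this index set to `F₂`, sending each index to the corresponding
commutator, is injective and has image the commutator subgroup. -/
theorem commutator_subgroup_F2_free_basis :
    Function.Injective (FreeGroup.lift basisFamilyF2) ∧
      (FreeGroup.lift basisFamilyF2).range = commutator (FreeGroup (Fin 2)) :=
  ⟨CommF2.injective_lift, CommF2.range_eq⟩
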